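/- Let σ: 𝒜* → ℬ* be a non-erasing morphism of free monoids over finite alphabets and let X ⊆ 𝒜^ℤ be a subshift. If σ is recognizable in X, then the measure transfer map σ^ℳ_X: ℳ(X) → ℳ(σ(X)) is injective. -/

import Mathlib

open MeasureTheory Filter
open scoped ENNReal

namespace SAdicPaper

universe u v

/-- Biinfinite words over the alphabet `A`. -/
def ZWord (A : Type u) : Type u := ℤ → A

noncomputable instance {A : Type u} : TopologicalSpace (ZWord A) :=
  @Pi.topologicalSpace ℤ (fun _ => A) (fun _ => ⊥)

instance {A : Type u} : MeasurableSpace (ZWord A) :=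
  @MeasurableSpace.pi ℤ (fun _ => A) (fun _ => ⊤)

instance finAddTwoNonempty (n : ℕ) : Nonempty (Fin (n + 2)) := ⟨⟨0, by omega⟩⟩

variable {A : Type u} {B : Type v}

/-- The shift map `T`. -/
def shift (x : ZWord A) : ZWord A := fun i => x (i + 1)

/-- Shift by an arbitrary integer amount. -/
def shiftBy (m : ℤ) (x : ZWord A) : ZWord A := fun i => x (i + m)

/-- A subshift: a non-empty, closed, shift-invariant set of biinfinite words. -/
def IsSubshift (X : Set (ZWord A)) : Prop :=
  X.Nonempty ∧ IsClosed X ∧ shift '' X = X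

/-- The finite subword of `x` of length `n` starting at position `k`. -/
def subword (x : ZWord A) (k : ℤ) (n : ℕ) : List A :=
  (List.range n).map fun i => x (k + i)

/-- The language of finite factors of elements of `X`. -/
def lang (X : Set (ZWord A)) : Set (List A) :=
  { w | ∃ x ∈ X, ∃ k : ℤ, w = subword x k w.length }

/-- The subshift generated by a language. -/
def subshiftGen (L : Set (List A)) : Set (ZWord A) :=
  { x | ∀ (k : ℤ) (n : ℕ), ∃ u ∈ L, subword x k n <:+: u }

/-- Extension of a letter map `σ : A → List B` to words: the free monoid morphism. -/
def wordMap (σ : A → List B) (w : List A) : List B := (w.map σ).flatten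

/-- A morphism is non-erasing if no letter is mapped to the empty word. -/
def NonErasing (σ : A → List B) : Prop := ∀ a, σ a ≠ []

/-- The image subshift `σ(X)`. -/
def imageSubshift (σ : A → List B) (X : Set (ZWord A)) : Set (ZWord B) :=
  subshiftGen (wordMap σ '' lang X)

/-- The position at which the `σ`-image of the letter of `x` at index `n` starts
(the image of the letter at index 1 starts at index 1). -/
noncomputable def offset (σ : A → List B) (x : ZWord A) (n : ℤ) : ℤ :=
  if 1 ≤ n then 1 + ∑ i ∈ Finset.Ico (1 : ℤ) n, ((σ (x i)).length : ℤ)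
  else 1 - ∑ i ∈ Finset.Ico n (1 : ℤ), ((σ (x i)).length : ℤ)

/-- The induced map `σ^ℤ` on biinfinite words. -/
noncomputable def sigmaZ [Nonempty B] (σ : A → List B) (x : ZWord A) : ZWord B := fun j =>
  let n := Classical.epsilon fun n : ℤ => offset σ x n ≤ j ∧ j < offset σ x (n + 1)
  (σ (x n)).getD (j - offset σ x n).toNat (Classical.arbitrary B)

/-- The cylinder `[w]`: biinfinite words `x` with `x₁ ⋯ x_{|w|} = w`. -/
def cylinder (w : List A) : Set (ZWord A) :=
  { x | ∀ i : Fin w.length, x (((i : ℕ) : ℤ) + 1) = w.get i }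

/-- Shift-invariance of a measure. -/
def ShiftInvariantM (μ : Measure (ZWord A)) : Prop :=
  ∀ S : Set (ZWord A), MeasurableSet S → μ (shift ⁻¹' S) = μ S

/-- The cone `ℳ(X)` of shift-invariant finite Borel measures supported in `X`. -/
def measureCone (X : Set (ZWord A)) : Set (Measure (ZWord A)) :=
  { μ | μ Set.univ ≠ ⊤ ∧ ShiftInvariantM μ ∧ μ Xᶜ = 0 }

/-- The subdivision alphabet `𝒜_σ`. -/
def SubAlph (σ : A → List B) : Type u := Σ a : A, Fin (σ a).length

/-- The subdivision morphism `π_σ`. -/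
def subdivMap (σ : A → List B) : A → List (SubAlph σ) :=
  fun a => (List.finRange (σ a).length).map fun k => ⟨a, k⟩

/-- The letter-to-letter map `α_σ` on letters. -/
def letterMap (σ : A → List B) : SubAlph σ → B := fun p => (σ p.1).get p.2

/-- The letter-to-letter morphism `α_σ`. -/
def alphaMap (σ : A → List B) : SubAlph σ → List B := fun p => [letterMap σ p]

/-- The map `α_σ^ℤ` on biinfinite words. -/
def alphaZ (σ : A → List B) : ZWord (SubAlph σ) → ZWord B := fun y i => letterMap σ (y i)

/-- The measure transfer map `σ^ℳ`: the push-forward under `α_σ` of the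
subdivision measure `μ^{π_σ}` (realized concretely on the subdivision full shift). -/
noncomputable def transfer (σ : A → List B) (μ : Measure (ZWord A)) : Measure (ZWord B) :=
  letI := Classical.propDecidable (Nonempty (SubAlph σ))
  if h : Nonempty (SubAlph σ) then
    haveI := h
    Measure.map (alphaZ σ)
      (Measure.sum fun k : ℕ =>
        Measure.map (fun x => shift^[k] (sigmaZ (subdivMap σ) x))
          (μ.restrict { x | k < (σ (x 1)).length }))
  else 0

/-- Recognizability of `σ` in a subshift `X`. -/
def Recognizable [Nonempty B] (σ : A → List B) (X : Set (ZWord A)) : Prop :=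
  ∀ x ∈ X, ∀ x' ∈ X, ∀ k l : ℕ,
    k < (σ (x 1)).length → l < (σ (x' 1)).length →
    shift^[k] (sigmaZ σ x) = shift^[l] (sigmaZ σ x') → x = x' ∧ k = l

/-- `x` and `y` lie in the same shift-orbit. -/
def sameOrbit (x y : ZWord A) : Prop := ∃ m : ℤ, y = shiftBy m x

/-- `σ` is shift-orbit injective in `X`. -/
def ShiftOrbitInjective [Nonempty B] (σ : A → List B) (X : Set (ZWord A)) : Prop :=
  ∀ x ∈ X, ∀ y ∈ X, (sameOrbit (sigmaZ σ x) (sigmaZ σ y) ↔ sameOrbit x y)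

/-- The periodic biinfinite word `w^{±∞}`. -/
def periodicWord (w : List A) (h : w ≠ []) : ZWord A := fun i =>
  w.get ⟨(i % (w.length : ℤ)).toNat, by
    have hl : 0 < w.length := by cases w with | nil => exact absurd rfl h | cons a t => simp
    have h1 : 0 ≤ i % (w.length : ℤ) := Int.emod_nonneg i (by exact_mod_cast hl.ne')
    have h2 : i % (w.length : ℤ) < (w.length : ℤ) := Int.emod_lt_of_pos i (by exact_mod_cast hl)
    omega⟩

/-- A word is a proper power if `w = u^m` for some `m ≥ 2`. -/
def IsProperPower (w : List A) : Prop :=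
  ∃ (u : List A) (m : ℕ), 2 ≤ m ∧ w = (List.replicate m u).flatten

/-- `σ` is shift-period preserving in `X`. -/
def ShiftPeriodPreserving (σ : A → List B) (X : Set (ZWord A)) : Prop :=
  ∀ (w : List A) (h : w ≠ []), periodicWord w h ∈ X →
    (IsProperPower w ↔ IsProperPower (wordMap σ w))

/-- The incidence matrix `M(σ)` of a morphism. -/
noncomputable def incidence (σ : A → List B) : Matrix B A ℝ :=
  letI := Classical.decEq B
  Matrix.of fun b a => ((σ a).count b : ℝ)

/-- The number `|u|_w` of occurrences of `w` as a factor of `u`. -/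
noncomputable def occ (w u : List A) : ℕ :=
  letI := Classical.decEq A
  ((List.range (u.length + 1)).filter fun i => decide ((u.drop i).take w.length = w)).length

/-- A minimal subshift. -/
def IsMinimalSubshift (X : Set (ZWord A)) : Prop :=
  IsSubshift X ∧ ∀ Y, Y ⊆ X → IsSubshift Y → Y = X

/-- A shift-invariant probability measure. -/
def IsProbInvariant (μ : Measure (ZWord A)) : Prop :=
  ShiftInvariantM μ ∧ μ Set.univ = 1

/-- An ergodic shift-invariant probability measure: not a positive linear combination
of two distinct shift-invariant probability measures. -/
def IsErgodicMeasure (μ : Measure (ZWord A)) : Prop :=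
  IsProbInvariant μ ∧
    ∀ ν₁ ν₂ : Measure (ZWord A), IsProbInvariant ν₁ → IsProbInvariant ν₂ →
      ∀ c₁ c₂ : ℝ≥0∞, 0 < c₁ → 0 < c₂ → μ = c₁ • ν₁ + c₂ • ν₂ → ν₁ = ν₂

/-- Aperiodicity: no shift-periodic word in `X`. -/
def Aperiodic (X : Set (ZWord A)) : Prop :=
  ∀ x ∈ X, ∀ p : ℕ, 0 < p → shift^[p] x ≠ x

/-- Unique ergodicity of a subshift `X`. -/
def UniquelyErgodic (X : Set (ZWord A)) : Prop :=
  ∃! μ : Measure (ZWord A), IsErgodicMeasure μ ∧ μ ∈ measureCone X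

/-- The complexity function `p_X(n)`. -/
noncomputable def complexity (X : Set (ZWord A)) (n : ℕ) : ℕ :=
  Set.ncard { w : List A | w ∈ lang X ∧ w.length = n }

/-- The letter frequency vector of a measure. -/
noncomputable def freqMap (μ : Measure (ZWord A)) : A → ℝ := fun a => (μ (cylinder [a])).toReal

/-- The letter frequency cone `𝒞(X)`. -/
def letterFreqCone (X : Set (ZWord A)) : Set (A → ℝ) := freqMap '' measureCone X

/-- A primitive substitution: some power of the incidence matrix is positive. -/
def Primitive (τ : A → List A) : Prop :=
  ∃ p : ℕ, 0 < p ∧ ∀ a b : A, b ∈ (wordMap τ)^[p] [a]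

/-- The substitutive subshift of a substitution. -/
def substitutiveSubshift (τ : A → List A) : Set (ZWord A) :=
  { x | ∀ (k : ℤ) (m : ℕ), ∃ (p : ℕ) (a : A), 1 ≤ p ∧ subword x k m <:+: (wordMap τ)^[p] [a] }

section Directive

variable {𝒜 : ℕ → Type u}

/-- The telescoped morphism `σ_{[0,n)}`, on letters. -/
def teleW (σ : ∀ n, 𝒜 (n+1) → List (𝒜 n)) : (n : ℕ) → 𝒜 n → List (𝒜 0)
  | 0, a => [a]
  | n+1, a => wordMap (teleW σ n) (σ n a)

/-- The telescoped morphism `σ_{[k,k+m)}`, on letters. -/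
def teleWFrom (σ : ∀ n, 𝒜 (n+1) → List (𝒜 n)) (k : ℕ) : (m : ℕ) → 𝒜 (k + m) → List (𝒜 k)
  | 0, a => [a]
  | m+1, a => wordMap (teleWFrom σ k m) (σ (k + m) a)

/-- An everywhere growing directive sequence. -/
def EverywhereGrowing (σ : ∀ n, 𝒜 (n+1) → List (𝒜 n)) : Prop :=
  ∀ N : ℕ, ∃ n₀ : ℕ, ∀ n, n₀ ≤ n → ∀ a : 𝒜 n, N ≤ (teleW σ n a).length

/-- The subshift generated by a directive sequence. -/
def genSubshift (σ : ∀ n, 𝒜 (n+1) → List (𝒜 n)) : Set (ZWord (𝒜 0)) :=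
  { x | ∀ (k : ℤ) (m : ℕ), ∃ n : ℕ, 1 ≤ n ∧ ∃ a : 𝒜 n, subword x k m <:+: teleW σ n a }

/-- The level-`k` subshift of a directive sequence. -/
def levelSubshift (σ : ∀ n, 𝒜 (n+1) → List (𝒜 n)) (k : ℕ) : Set (ZWord (𝒜 k)) :=
  genSubshift (𝒜 := fun n => 𝒜 (k + n)) (fun n => σ (k + n))

/-- A vector tower on a directive sequence. -/
def IsVectorTower [∀ n, Fintype (𝒜 n)] (σ : ∀ n, 𝒜 (n+1) → List (𝒜 n))
    (v : ∀ n, 𝒜 n → ℝ) : Prop :=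
  (∀ n a, 0 ≤ v n a) ∧ ∀ n, v n = (incidence (σ n)).mulVec (v (n+1))

/-- `μ = 𝔪(v)` is the invariant measure on the generated subshift obtained by
evaluating the vector tower `v`. -/
def IsTowerMeasure [∀ n, Fintype (𝒜 n)] (σ : ∀ n, 𝒜 (n+1) → List (𝒜 n))
    (v : ∀ n, 𝒜 n → ℝ) (μ : Measure (ZWord (𝒜 0))) : Prop :=
  μ ∈ measureCone (genSubshift σ) ∧
    ∀ w : List (𝒜 0),
      Tendsto (fun n => ∑ a : 𝒜 n, v n a * (occ w (teleW σ n a) : ℝ)) atTop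
        (nhds ((μ (cylinder w)).toReal))

/-- A measure tower on a directive sequence. -/
def IsMeasureTower (σ : ∀ n, 𝒜 (n+1) → List (𝒜 n))
    (μs : ∀ n, Measure (ZWord (𝒜 n))) : Prop :=
  (∀ n, μs n ∈ measureCone (Set.univ : Set (ZWord (𝒜 n)))) ∧
    ∀ n, μs n = transfer (σ n) (μs (n+1))

/-- The intermediate letter frequency cone `𝒞_n`. -/
def freqConeAt [∀ n, Fintype (𝒜 n)] (σ : ∀ n, 𝒜 (n+1) → List (𝒜 n)) (n : ℕ) :
    Set (𝒜 n → ℝ) :=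
  ⋂ m : ℕ, (incidence (teleWFrom σ n (m+1))).mulVec '' { v | ∀ a, 0 ≤ v a }

/-- The dimension `c_n` of the intermediate letter frequency cone. -/
noncomputable def dimC [∀ n, Fintype (𝒜 n)] (σ : ∀ n, 𝒜 (n+1) → List (𝒜 n)) (n : ℕ) : ℕ :=
  Module.finrank ℝ (Submodule.span ℝ (freqConeAt σ n))

end Directive

section Prolong

variable {B : Type u} {𝒜 : ℕ → Type u}

/-- Alphabets of the prolonged directive sequence `⃖σ^τ`. -/
def prolongA (B : Type u) (𝒜 : ℕ → Type u) : ℕ → Type u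
  | 0 => B
  | n+1 => 𝒜 n

instance prolongAFintype [Fintype B] [∀ n, Fintype (𝒜 n)] :
    ∀ n, Fintype (prolongA B 𝒜 n)
  | 0 => inferInstanceAs (Fintype B)
  | n+1 => inferInstanceAs (Fintype (𝒜 n))

/-- The prolonged directive sequence `⃖σ^τ`. -/
def prolongSeq (τ : 𝒜 0 → List B) (σ : ∀ n, 𝒜 (n+1) → List (𝒜 n)) :
    ∀ n, prolongA B 𝒜 (n+1) → List (prolongA B 𝒜 n)
  | 0 => τ
  | n+1 => σ n

/-- The prolonged vector tower `⃖v^τ`. -/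
noncomputable def prolongTower [Fintype (𝒜 0)] (τ : 𝒜 0 → List B) (v : ∀ n, 𝒜 n → ℝ) :
    ∀ n, prolongA B 𝒜 n → ℝ
  | 0 => (incidence τ).mulVec (v 0)
  | n+1 => v n

end Prolong

/-- The morphism `τ_d : 𝒜_{d+1}* → 𝒜_d*`, `a_i ↦ a_i a_i` (i ≤ d), `a_{d+1} ↦ a_1 ⋯ a_d`. -/
def tauMap (d : ℕ) : Fin (d+1) → List (Fin d) := fun i =>
  if h : (i : ℕ) < d then [⟨i, h⟩, ⟨i, h⟩] else List.ofFn (fun j : Fin d => j)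

/-- Sizes of the alphabets of the alternating sequence `σ₂ ∘ τ₂ ∘ σ₃ ∘ τ₃ ∘ ⋯`. -/
def sz (n : ℕ) : ℕ := n / 2 + 2

/-- The alternating directive sequence `σ₂ ∘ τ₂ ∘ σ₃ ∘ τ₃ ∘ ⋯`. -/
def altSeq (σfam : ∀ d, Fin d → List (Fin d)) (n : ℕ) : Fin (sz (n+1)) → List (Fin (sz n)) :=
  fun a =>
    if h : n % 2 = 0 then
      σfam (sz n) (Fin.cast (by simp only [sz]; omega) a)
    else
      tauMap (sz n) (Fin.cast (by simp only [sz]; omega) a)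

section AuxInj

variable {A : Type u} {B : Type v}

/-! ### Measurability helpers -/

theorem aux_measurable_from_countable {α : Type*} {β : Type*} [MeasurableSpace α]
    [MeasurableSpace β] [Countable α] [MeasurableSingletonClass α] (f : α → β) :
    Measurable f := fun _ _ => (Set.to_countable _).measurableSet

theorem measurable_coord (i : ℤ) :
    @Measurable (ZWord A) A _ ⊤ (fun x => x i) :=
  @measurable_pi_apply ℤ (fun _ => A) (fun _ => ⊤) i

theorem measurable_zword_lambda {α : Type*} [MeasurableSpace α] (f : α → ZWord B)
    (h : ∀ i : ℤ, @Measurable α B _ ⊤ fun x => f x i) : Measurable f :=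
  @measurable_pi_lambda α ℤ (fun _ => B) _ (fun _ => ⊤) f h

/-- A function on `ZWord A` depending only on finitely many coordinates is measurable. -/
theorem measurable_of_depends [Finite A] [Nonempty A] {C : Type*} [MeasurableSpace C]
    (f : ZWord A → C) (F : Finset ℤ)
    (h : ∀ x y : ZWord A, (∀ i ∈ F, x i = y i) → f x = f y) : Measurable f := by
  classical
  letI mA : MeasurableSpace A := ⊤
  haveI : MeasurableSingletonClass A := ⟨fun _ => trivial⟩
  have hfactor : f = (fun v : (F → A) =>
      f (fun i => if hi : i ∈ F then v ⟨i, hi⟩ else Classical.arbitrary A)) ∘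
      (fun x (i : F) => x (i : ℤ)) := by
    funext x
    exact (h _ x (fun i hi => by simp [hi])).symm
  rw [hfactor]
  exact (aux_measurable_from_countable _).comp
    (measurable_pi_lambda _ fun i => measurable_coord _)

theorem measurable_shift : Measurable (shift : ZWord A → ZWord A) :=
  measurable_zword_lambda _ fun i => measurable_coord (i + 1)

theorem measurable_shift_iter (k : ℕ) : Measurable (shift^[k] : ZWord A → ZWord A) := by
  induction k with
  | zero => exact measurable_id
  | succ n ih => rw [Function.iterate_succ']; exact measurable_shift.comp ih

/-! ### Offset combinatorics -/

theorem ico_succ_singleton (n : ℤ) : Finset.Ico n (n + 1) = {n} := by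
  ext i; simp only [Finset.mem_Ico, Finset.mem_singleton]; omega

theorem sum_Ico_split (f : ℤ → ℤ) {m n k : ℤ} (hmn : m ≤ n) (hnk : n ≤ k) :
    ∑ i ∈ Finset.Ico m k, f i =
      (∑ i ∈ Finset.Ico m n, f i) + ∑ i ∈ Finset.Ico n k, f i := by
  rw [← Finset.Ico_union_Ico_eq_Ico hmn hnk,
    Finset.sum_union (Finset.Ico_disjoint_Ico_consecutive m n k)]

theorem offset_one (σ : A → List B) (x : ZWord A) : offset σ x 1 = 1 := by
  unfold offset; simp

theorem offset_succ (σ : A → List B) (x : ZWord A) (n : ℤ) :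
    offset σ x (n + 1) = offset σ x n + ((σ (x n)).length : ℤ) := by
  have hsing : ∀ m : ℤ, ∑ i ∈ Finset.Ico m (m + 1), ((σ (x i)).length : ℤ)
      = ((σ (x m)).length : ℤ) := fun m => by
    rw [ico_succ_singleton, Finset.sum_singleton]
  unfold offset
  rcases lt_trichotomy n 0 with h | h | h
  · rw [if_neg (by omega), if_neg (by omega),
      sum_Ico_split _ (by omega : n ≤ n + 1) (by omega : n + 1 ≤ 1), hsing]
    ring
  · subst h
    rw [if_pos (by omega), if_neg (by omega)]
    have h1 : Finset.Ico (1:ℤ) (0 + 1) = ∅ := by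
      ext i; simp only [Finset.mem_Ico, Finset.notMem_empty, iff_false]; omega
    have h2 : Finset.Ico (0:ℤ) 1 = {0} := by
      ext i; simp only [Finset.mem_Ico, Finset.mem_singleton]; omega
    rw [h1, h2, Finset.sum_empty, Finset.sum_singleton]
    ring
  · rw [if_pos (by omega), if_pos (by omega),
      sum_Ico_split _ (by omega : (1:ℤ) ≤ n) (by omega : n ≤ n + 1), hsing]
    ring

theorem offset_mono (σ : A → List B) (x : ZWord A) : Monotone (offset σ x) := by
  intro m n hmn
  refine Int.le_induction (motive := fun n _ => offset σ x m ≤ offset σ x n) le_rfl ?_ n hmn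
  intro n _ ih
  have hnn : (0:ℤ) ≤ ((σ (x n)).length : ℤ) := Int.natCast_nonneg _
  have hs := offset_succ σ x n
  omega

theorem offset_succ_le {σ : A → List B} (hσ : NonErasing σ) (x : ZWord A) (n : ℤ) :
    offset σ x n + 1 ≤ offset σ x (n + 1) := by
  have hs := offset_succ σ x n
  have : 0 < (σ (x n)).length := List.length_pos_iff.mpr (hσ _)
  omega

theorem exists_window {σ : A → List B} (hσ : NonErasing σ) (x : ZWord A) (j : ℤ) :
    ∃ n : ℤ, offset σ x n ≤ j ∧ j < offset σ x (n + 1) := by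
  have base : offset σ x 1 ≤ 1 ∧ (1:ℤ) < offset σ x (1 + 1) := by
    refine ⟨le_of_eq (offset_one σ x), ?_⟩
    have := offset_succ_le hσ x 1
    rw [offset_one] at this; omega
  rcases le_or_gt 1 j with hj | hj
  · refine Int.le_induction
      (motive := fun j _ => ∃ n : ℤ, offset σ x n ≤ j ∧ j < offset σ x (n + 1)) ⟨1, base⟩ ?_ j hj
    intro j _ ih
    obtain ⟨n, h1, h2⟩ := ih
    rcases lt_or_ge (j + 1) (offset σ x (n + 1)) with h | h
    · exact ⟨n, by omega, h⟩
    · refine ⟨n + 1, h, ?_⟩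
      have := offset_succ_le hσ x (n + 1)
      omega
  · have hj' : j ≤ 1 := by omega
    clear hj
    refine Int.le_induction_down
      (motive := fun j _ => ∃ n : ℤ, offset σ x n ≤ j ∧ j < offset σ x (n + 1)) ⟨1, base⟩ ?_ j hj'
    intro j _ ih
    obtain ⟨n, h1, h2⟩ := ih
    rcases le_or_gt (offset σ x n) (j - 1) with h | h
    · exact ⟨n, h, by omega⟩
    · refine ⟨n - 1, ?_, ?_⟩
      · have hle := offset_succ_le hσ x (n - 1)
        have he : n - 1 + 1 = n := by omega
        rw [he] at hle
        omega
      · have he : n - 1 + 1 = n := by omega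
        rw [he]; omega

theorem window_unique {σ : A → List B} (x : ZWord A) {j n n' : ℤ}
    (h1 : offset σ x n ≤ j) (h2 : j < offset σ x (n + 1))
    (h1' : offset σ x n' ≤ j) (h2' : j < offset σ x (n' + 1)) : n = n' := by
  by_contra hne
  rcases lt_or_gt_of_ne hne with h | h
  · exact absurd (le_trans (offset_mono σ x (by omega : n + 1 ≤ n')) h1') (by omega)
  · exact absurd (le_trans (offset_mono σ x (by omega : n' + 1 ≤ n)) h1) (by omega)

theorem sigmaZ_eq_getD [Nonempty B] (σ : A → List B) (x : ZWord A) {j n : ℤ}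
    (h1 : offset σ x n ≤ j) (h2 : j < offset σ x (n + 1)) :
    sigmaZ σ x j = (σ (x n)).getD (j - offset σ x n).toNat (Classical.arbitrary B) := by
  have hex : ∃ m : ℤ, offset σ x m ≤ j ∧ j < offset σ x (m + 1) := ⟨n, h1, h2⟩
  have hsp := Classical.epsilon_spec hex
  have heq : Classical.epsilon (fun m : ℤ => offset σ x m ≤ j ∧ j < offset σ x (m + 1)) = n :=
    window_unique x hsp.1 hsp.2 h1 h2
  have hdef : sigmaZ σ x j =
      (σ (x (Classical.epsilon fun m : ℤ => offset σ x m ≤ j ∧ j < offset σ x (m + 1)))).getD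
        (j - offset σ x
          (Classical.epsilon fun m : ℤ => offset σ x m ≤ j ∧ j < offset σ x (m + 1))).toNat
        (Classical.arbitrary B) := rfl
  rw [hdef, heq]

theorem sigmaZ_apply [Nonempty B] {σ : A → List B} (x : ZWord A) {j n : ℤ}
    (h1 : offset σ x n ≤ j) (h2 : j < offset σ x (n + 1)) :
    sigmaZ σ x j = (σ (x n))[(j - offset σ x n).toNat]'(by
      have := offset_succ σ x n; omega) := by
  rw [sigmaZ_eq_getD σ x h1 h2]
  exact List.getD_eq_getElem _ _ _

theorem measurable_offset [Finite A] [Nonempty A] (σ : A → List B) (n : ℤ) :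
    Measurable (fun x : ZWord A => offset σ x n) := by
  apply measurable_of_depends _ (Finset.Ico 1 n ∪ Finset.Ico n 1)
  intro x y hxy
  unfold offset
  split_ifs with h
  · congr 1
    exact Finset.sum_congr rfl fun i hi => by rw [hxy i (Finset.mem_union_left _ hi)]
  · congr 1
    exact Finset.sum_congr rfl fun i hi => by rw [hxy i (Finset.mem_union_right _ hi)]

theorem measurable_sigmaZ [Finite A] [Nonempty A] [Nonempty B] (σ : A → List B)
    (hσ : NonErasing σ) : Measurable (sigmaZ σ : ZWord A → ZWord B) := by
  apply measurable_zword_lambda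
  intro j
  intro s hs
  have hcover : (fun x : ZWord A => sigmaZ σ x j) ⁻¹' s =
      ⋃ n : ℤ, ({x : ZWord A | offset σ x n ≤ j ∧ j < offset σ x (n + 1)} ∩
        (fun x : ZWord A =>
          (σ (x n)).getD (j - offset σ x n).toNat (Classical.arbitrary B)) ⁻¹' s) := by
    ext x
    simp only [Set.mem_preimage, Set.mem_iUnion, Set.mem_inter_iff, Set.mem_setOf_eq]
    constructor
    · intro hx
      obtain ⟨n, h1, h2⟩ := exists_window hσ x j
      exact ⟨n, ⟨h1, h2⟩, by rwa [← sigmaZ_eq_getD σ x h1 h2]⟩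
    · rintro ⟨n, ⟨h1, h2⟩, hx⟩
      rwa [sigmaZ_eq_getD σ x h1 h2]
  rw [hcover]
  refine MeasurableSet.iUnion fun n => MeasurableSet.inter ?_ ?_
  · have hW : {x : ZWord A | offset σ x n ≤ j ∧ j < offset σ x (n + 1)} =
        (fun x : ZWord A => (offset σ x n, offset σ x (n + 1))) ⁻¹'
          {p : ℤ × ℤ | p.1 ≤ j ∧ j < p.2} := rfl
    rw [hW]
    exact ((measurable_offset σ n).prodMk (measurable_offset σ (n + 1)))
      ((Set.to_countable _).measurableSet)
  · refine (@measurable_of_depends A _ _ B ⊤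
      (fun x : ZWord A =>
        (σ (x n)).getD (j - offset σ x n).toNat (Classical.arbitrary B))
      ((Finset.Ico 1 n ∪ Finset.Ico n 1) ∪ {n}) ?_) hs
    intro x y hxy
    have hoff : offset σ x n = offset σ y n := by
      unfold offset
      split_ifs with h
      · congr 1
        exact Finset.sum_congr rfl fun i hi =>
          by rw [hxy i (Finset.mem_union_left _ (Finset.mem_union_left _ hi))]
      · congr 1
        exact Finset.sum_congr rfl fun i hi =>
          by rw [hxy i (Finset.mem_union_left _ (Finset.mem_union_right _ hi))]
    rw [hoff, hxy n (Finset.mem_union_right _ (Finset.mem_singleton_self n))]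

/-! ### The subdivision decomposition -/

theorem subdiv_length (σ : A → List B) (a : A) :
    (subdivMap σ a).length = (σ a).length := by
  unfold subdivMap; exact (List.length_map ..).trans (List.length_finRange ..)

theorem subdiv_nonErasing {σ : A → List B} (hσ : NonErasing σ) :
    NonErasing (subdivMap σ) := by
  intro a h
  apply hσ a
  have hl := subdiv_length σ a
  rw [h] at hl
  exact List.length_eq_zero_iff.mp hl.symm

theorem subAlph_nonempty [Nonempty A] {σ : A → List B} (hσ : NonErasing σ) :
    Nonempty (SubAlph σ) :=
  ⟨⟨Classical.arbitrary A, ⟨0, List.length_pos_iff.mpr (hσ _)⟩⟩⟩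

theorem offset_subdiv (σ : A → List B) (x : ZWord A) (n : ℤ) :
    offset (subdivMap σ) x n = offset σ x n := by
  unfold offset
  simp only [subdiv_length]

theorem measurable_alphaZ (σ : A → List B) :
    Measurable (alphaZ σ : ZWord (SubAlph σ) → ZWord B) :=
  measurable_zword_lambda _ fun i =>
    (@measurable_from_top (SubAlph σ) B ⊤ (letterMap σ)).comp (measurable_coord i)

theorem alphaZ_shift (σ : A → List B) (y : ZWord (SubAlph σ)) (k : ℕ) :
    alphaZ σ (shift^[k] y) = shift^[k] (alphaZ σ y) := by
  induction k with
  | zero => rfl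
  | succ n ih =>
      rw [Function.iterate_succ_apply', Function.iterate_succ_apply', ← ih]
      rfl

theorem letterMap_subdiv (σ : A → List B) (a : A) (i : ℕ) (h : i < (subdivMap σ a).length) :
    letterMap σ ((subdivMap σ a)[i]) = (σ a)[i]'(by rwa [subdiv_length] at h) := by
  have hi : (subdivMap σ a)[i] = ⟨a, ⟨i, by rwa [subdiv_length] at h⟩⟩ := by
    unfold subdivMap; exact (List.getElem_map ..).trans (by simp; rfl)
  rw [hi]
  rfl

theorem alphaZ_sigmaZ [Nonempty A] [Nonempty B] (σ : A → List B) (hσ : NonErasing σ)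
    (hne : Nonempty (SubAlph σ)) (x : ZWord A) :
    alphaZ σ (@sigmaZ A (SubAlph σ) hne (subdivMap σ) x) = sigmaZ σ x := by
  funext j
  obtain ⟨n, h1, h2⟩ := exists_window hσ x j
  have h1' : offset (subdivMap σ) x n ≤ j := by rw [offset_subdiv]; exact h1
  have h2' : j < offset (subdivMap σ) x (n + 1) := by rw [offset_subdiv]; exact h2
  have hL := @sigmaZ_apply A (SubAlph σ) hne (subdivMap σ) x j n h1' h2'
  have hR := @sigmaZ_apply A B _ σ x j n h1 h2
  show letterMap σ (@sigmaZ A (SubAlph σ) hne (subdivMap σ) x j) = _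
  rw [hL, hR]
  simp only [offset_subdiv]
  rw [letterMap_subdiv]

/-! ### Computation of `transfer` on measurable sets -/

theorem transfer_apply [Finite A] [Nonempty A] [Nonempty B]
    (σ : A → List B) (hσ : NonErasing σ) (μ : Measure (ZWord A))
    {S : Set (ZWord B)} (hS : MeasurableSet S) :
    transfer σ μ S = ∑' k : ℕ,
      μ ({x : ZWord A | k < (σ (x 1)).length} ∩
        (fun x : ZWord A => shift^[k] (sigmaZ σ x)) ⁻¹' S) := by
  have hne : Nonempty (SubAlph σ) := subAlph_nonempty hσ
  have hαm : Measurable (alphaZ σ : ZWord (SubAlph σ) → ZWord B) := measurable_alphaZ σ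
  have hσ'm : Measurable (@sigmaZ A (SubAlph σ) hne (subdivMap σ)) :=
    @measurable_sigmaZ A (SubAlph σ) _ _ hne (subdivMap σ) (subdiv_nonErasing hσ)
  unfold transfer
  rw [dif_pos hne]
  rw [Measure.map_apply hαm hS, Measure.sum_apply _ (hαm hS)]
  refine tsum_congr fun k => ?_
  have hΦ'm : Measurable fun x : ZWord A =>
      shift^[k] (@sigmaZ A (SubAlph σ) hne (subdivMap σ) x) :=
    (measurable_shift_iter k).comp hσ'm
  rw [Measure.map_apply hΦ'm (hαm hS), Measure.restrict_apply (hΦ'm (hαm hS))]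
  congr 1
  ext x
  simp only [Set.mem_inter_iff, Set.mem_preimage, Set.mem_setOf_eq]
  rw [alphaZ_shift, alphaZ_sigmaZ σ hσ hne]
  exact and_comm

end AuxInj
/-- If a non-erasing morphism `σ : 𝒜* → ℬ*` is recognizable in a subshift
`X ⊆ 𝒜^ℤ`, then the measure transfer map `σ^ℳ_X : ℳ(X) → ℳ(σ(X))` is injective. -/
theorem measure_transfer_injective_of_recognizable {A : Type u} {B : Type v}
    [Fintype A] [Nonempty A] [Fintype B] [Nonempty B]
    (σ : A → List B) (hσ : NonErasing σ)
    (X : Set (ZWord A)) (hX : IsSubshift X)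
    (hrec : Recognizable σ X) :
    Set.InjOn (transfer σ) (measureCone X) := by
  classical
  -- set up the standard Borel structure on `ZWord A` and `ZWord B`
  letI tA : TopologicalSpace A := ⊥
  haveI : DiscreteTopology A := ⟨rfl⟩
  letI mA : MeasurableSpace A := ⊤
  haveI : BorelSpace A :=
    ⟨le_antisymm
      (fun s _ => MeasurableSpace.GenerateMeasurable.basic s (isOpen_discrete s)) le_top⟩
  haveI : PolishSpace (ZWord A) := by unfold ZWord; haveI : PolishSpace A := inferInstance; infer_instance
  haveI : BorelSpace (ZWord A) := by unfold ZWord; exact Pi.borelSpace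
  haveI : StandardBorelSpace (ZWord A) := inferInstance
  letI tB : TopologicalSpace B := ⊥
  haveI : DiscreteTopology B := ⟨rfl⟩
  letI mB : MeasurableSpace B := ⊤
  haveI : BorelSpace B :=
    ⟨le_antisymm
      (fun s _ => MeasurableSpace.GenerateMeasurable.basic s (isOpen_discrete s)) le_top⟩
  haveI : PolishSpace (ZWord B) := by unfold ZWord; haveI : PolishSpace B := inferInstance; infer_instance
  haveI : BorelSpace (ZWord B) := by unfold ZWord; exact Pi.borelSpace
  haveI : StandardBorelSpace (ZWord B) := inferInstance
  haveI : MeasurableSpace.CountablySeparated (ZWord B) := inferInstance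
  -- basic measurability facts
  have hΦm : ∀ k : ℕ, Measurable (fun x : ZWord A => shift^[k] (sigmaZ σ x)) := fun k =>
    (measurable_shift_iter k).comp (measurable_sigmaZ σ hσ)
  have hpre1 : ∀ s : Set A, MeasurableSet ((fun x : ZWord A => x 1) ⁻¹' s) := fun s =>
    (measurable_coord 1) MeasurableSpace.measurableSet_top
  have hE : ∀ k : ℕ, MeasurableSet {x : ZWord A | k < (σ (x 1)).length} := fun k =>
    hpre1 {a : A | k < (σ a).length}
  have hAj : ∀ j : ℕ, MeasurableSet {x : ZWord A | (σ (x 1)).length = j} := fun j =>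
    hpre1 {a : A | (σ a).length = j}
  have hXm : MeasurableSet X := hX.2.1.measurableSet
  intro μ hμ μ' hμ' heq
  -- the key identity: the transfer measure of the "tower over `S`" computes
  -- the weighted measure of `S`
  have key : ∀ ν : Measure (ZWord A), ν ∈ measureCone X → ∀ S : Set (ZWord A),
      MeasurableSet S →
      transfer σ ν (⋃ k : ℕ, (fun x : ZWord A => shift^[k] (sigmaZ σ x)) ''
          ({x : ZWord A | k < (σ (x 1)).length} ∩ X ∩ S)) =
        ∑' k : ℕ, ν ({x : ZWord A | k < (σ (x 1)).length} ∩ S) := by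
    intro ν hν S hS
    have hΨm : MeasurableSet (⋃ k : ℕ, (fun x : ZWord A => shift^[k] (sigmaZ σ x)) ''
        ({x : ZWord A | k < (σ (x 1)).length} ∩ X ∩ S)) := by
      refine MeasurableSet.iUnion fun k => ?_
      refine MeasurableSet.image_of_measurable_injOn (((hE k).inter hXm).inter hS)
        (hΦm k) ?_
      intro x hx y hy hxy
      exact (hrec x hx.1.2 y hy.1.2 k k hx.1.1 hy.1.1 hxy).1
    rw [transfer_apply σ hσ ν hΨm]
    refine tsum_congr fun k => ?_
    have hTX : ∀ T : Set (ZWord A), ν T = ν (T ∩ X) := by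
      intro T
      refine le_antisymm ?_ (measure_mono Set.inter_subset_left)
      calc ν T ≤ ν ((T ∩ X) ∪ Xᶜ) := measure_mono (fun y hy => by
            by_cases h : y ∈ X
            · exact Or.inl ⟨hy, h⟩
            · exact Or.inr h)
        _ ≤ ν (T ∩ X) + ν Xᶜ := measure_union_le _ _
        _ = ν (T ∩ X) := by rw [hν.2.2, add_zero]
    rw [hTX ({x : ZWord A | k < (σ (x 1)).length} ∩
        (fun x : ZWord A => shift^[k] (sigmaZ σ x)) ⁻¹' _),
      hTX ({x : ZWord A | k < (σ (x 1)).length} ∩ S)]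
    congr 1
    ext x
    simp only [Set.mem_inter_iff, Set.mem_preimage, Set.mem_setOf_eq, Set.mem_iUnion,
      Set.mem_image]
    constructor
    · rintro ⟨⟨hxE, l, x', ⟨⟨hx'E, hx'X⟩, hx'S⟩, hxx'⟩, hxX⟩
      obtain ⟨heq1, -⟩ := hrec x' hx'X x hxX l k hx'E hxE hxx'
      exact ⟨⟨hxE, heq1 ▸ hx'S⟩, hxX⟩
    · rintro ⟨⟨hxE, hxS⟩, hxX⟩
      exact ⟨⟨hxE, ⟨k, x, ⟨⟨hxE, hxX⟩, hxS⟩, rfl⟩⟩, hxX⟩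
  have hsum : ∀ S : Set (ZWord A), MeasurableSet S →
      (∑' k : ℕ, μ ({x : ZWord A | k < (σ (x 1)).length} ∩ S)) =
        ∑' k : ℕ, μ' ({x : ZWord A | k < (σ (x 1)).length} ∩ S) := by
    intro S hS
    rw [← key μ hμ S hS, ← key μ' hμ' S hS, heq]
  -- from the weighted measures, recover the measures on each level set of the length
  have hfix : ∀ (ν : Measure (ZWord A)) (j : ℕ) (S : Set (ZWord A)),
      S ⊆ {x : ZWord A | (σ (x 1)).length = j} →
      (∑' k : ℕ, ν ({x : ZWord A | k < (σ (x 1)).length} ∩ S)) = (j : ℝ≥0∞) * ν S := by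
    intro ν j S hsub
    have hterm : ∀ k : ℕ, ν ({x : ZWord A | k < (σ (x 1)).length} ∩ S) =
        if k < j then ν S else 0 := by
      intro k
      split_ifs with h
      · congr 1
        rw [Set.inter_eq_right]
        intro x hx
        have hlen := hsub hx
        simp only [Set.mem_setOf_eq] at hlen ⊢
        omega
      · have hempty : {x : ZWord A | k < (σ (x 1)).length} ∩ S = ∅ := by
          ext x
          simp only [Set.mem_inter_iff, Set.mem_setOf_eq, Set.mem_empty_iff_false, iff_false,
            not_and]
          intro h1 h2
          have hlen := hsub h2
          simp only [Set.mem_setOf_eq] at hlen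
          omega
        rw [hempty, measure_empty]
    calc (∑' k : ℕ, ν ({x : ZWord A | k < (σ (x 1)).length} ∩ S))
        = ∑' k : ℕ, (if k < j then ν S else 0) := tsum_congr hterm
      _ = ∑ k ∈ Finset.range j, (if k < j then ν S else 0) := tsum_eq_sum (by
            intro k hk
            rw [if_neg (by simpa using hk)])
      _ = ∑ _k ∈ Finset.range j, ν S :=
            Finset.sum_congr rfl fun k hk => if_pos (Finset.mem_range.mp hk)
      _ = (j : ℝ≥0∞) * ν S := by rw [Finset.sum_const, Finset.card_range, nsmul_eq_mul]
  have hperj : ∀ (j : ℕ) (S : Set (ZWord A)), MeasurableSet S →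
      S ⊆ {x : ZWord A | (σ (x 1)).length = j} → μ S = μ' S := by
    intro j S hS hsub
    rcases Nat.eq_zero_or_pos j with hj | hj
    · subst hj
      have hempty : S = ∅ := by
        ext x
        simp only [Set.mem_empty_iff_false, iff_false]
        intro hx
        have hlen := hsub hx
        simp only [Set.mem_setOf_eq] at hlen
        exact hσ (x 1) (List.length_eq_zero_iff.mp hlen)
      rw [hempty, measure_empty, measure_empty]
    · have h3 : (j : ℝ≥0∞) * μ S = (j : ℝ≥0∞) * μ' S := by
        rw [← hfix μ j S hsub, ← hfix μ' j S hsub]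
        exact hsum S hS
      exact (ENNReal.mul_right_inj
        (by exact_mod_cast hj.ne') (ENNReal.natCast_ne_top j)).mp h3
  -- decompose an arbitrary measurable set according to the length of `σ` at index 1
  refine Measure.ext fun S hS => ?_
  set N : ℕ := Finset.univ.sup (fun a : A => (σ a).length) with hN
  have hcover : S = ⋃ j ∈ Finset.range (N + 1),
      (S ∩ {x : ZWord A | (σ (x 1)).length = j}) := by
    ext x
    simp only [Set.mem_iUnion, Finset.mem_range, Set.mem_inter_iff, Set.mem_setOf_eq,
      exists_prop]
    constructor
    · intro hx
      refine ⟨(σ (x 1)).length, ?_, hx, rfl⟩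
      have hle : (σ (x 1)).length ≤ N := by
        rw [hN]
        exact Finset.le_sup (f := fun a => (σ a).length) (Finset.mem_univ (x 1))
      omega
    · rintro ⟨j, -, hx, -⟩
      exact hx
  have hdisj : (↑(Finset.range (N + 1)) : Set ℕ).PairwiseDisjoint
      (fun j => S ∩ {x : ZWord A | (σ (x 1)).length = j}) := by
    intro i _ j _ hij
    rw [Function.onFun, Set.disjoint_left]
    rintro x ⟨-, h1⟩ ⟨-, h2⟩
    simp only [Set.mem_setOf_eq] at h1 h2
    exact hij (h1.symm.trans h2)
  have hmeas : ∀ j ∈ Finset.range (N + 1),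
      MeasurableSet (S ∩ {x : ZWord A | (σ (x 1)).length = j}) := fun j _ =>
    hS.inter (hAj j)
  rw [hcover, measure_biUnion_finset hdisj hmeas, measure_biUnion_finset hdisj hmeas]
  exact Finset.sum_congr rfl fun j _ =>
    hperj j _ (hS.inter (hAj j)) Set.inter_subset_right

end SAdicPaper
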